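/- The nine interior edges of K6 can be partitioned into three classes of pairwise noncrossing edges, and every partition of the interior edges of K6 into classes of pairwise noncrossing edges has at least three classes. -/

import Mathlib

/-- The cyclic length of the chord joining vertices `a` and `b` of `K₆`,
whose vertices are labeled by `ZMod 6` in cyclic order around a circle. -/
def cycLen (a b : ZMod 6) : ℕ := min (b - a).val (a - b).val

/-- An interior edge of `K₆`: a 2-element set of vertices at cyclic distance at least 2. -/
def InteriorEdge (e : Finset (ZMod 6)) : Prop :=
  e.card = 2 ∧ ∀ a ∈ e, ∀ b ∈ e, a ≠ b → 2 ≤ cycLen a b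

/-- A short edge of `K₆`: a 2-element set of vertices at cyclic distance exactly 2. -/
def ShortEdge (e : Finset (ZMod 6)) : Prop :=
  e.card = 2 ∧ ∀ a ∈ e, ∀ b ∈ e, a ≠ b → cycLen a b = 2

/-- A long edge of `K₆`: a 2-element set of vertices at cyclic distance exactly 3. -/
def LongEdge (e : Finset (ZMod 6)) : Prop :=
  e.card = 2 ∧ ∀ a ∈ e, ∀ b ∈ e, a ≠ b → cycLen a b = 3

/-- `x` lies in the open cyclic arc from `a` to `b` (in the cyclic order of labels). -/
def InArc (a b x : ZMod 6) : Prop := 0 < (x - a).val ∧ (x - a).val < (b - a).val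

/-- Two chords `{a,b}` and `{c,d}` cross iff their endpoint sets are disjoint and
exactly one of `c`, `d` lies in the open cyclic arc from `a` to `b`. -/
def Crosses (e f : Finset (ZMod 6)) : Prop :=
  Disjoint e f ∧ ∃ a b c d : ZMod 6, a ≠ b ∧ c ≠ d ∧ e = {a, b} ∧ f = {c, d} ∧
    Xor' (InArc a b c) (InArc a b d)

/-- A partition of the interior edges of `K₆` into (nonempty, pairwise disjoint) classes
of pairwise noncrossing edges. -/
def IsSheetPartition (P : Finset (Finset (Finset (ZMod 6)))) : Prop :=
  (∀ C ∈ P, C.Nonempty) ∧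
  (∀ C ∈ P, ∀ D ∈ P, C ≠ D → Disjoint C D) ∧
  (∀ e : Finset (ZMod 6), InteriorEdge e ↔ ∃ C ∈ P, e ∈ C) ∧
  (∀ C ∈ P, ∀ e ∈ C, ∀ f ∈ C, e ≠ f → ¬ Crosses e f)

instance : DecidablePred InteriorEdge := fun e => by unfold InteriorEdge; infer_instance
instance (a b x : ZMod 6) : Decidable (InArc a b x) := by unfold InArc; infer_instance
instance (e f : Finset (ZMod 6)) : Decidable (Crosses e f) := by
  unfold Crosses Xor'; infer_instance
instance (P : Finset (Finset (Finset (ZMod 6)))) : Decidable (IsSheetPartition P) := by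
  unfold IsSheetPartition
  exact @instDecidableAnd _ _ inferInstance
    (@instDecidableAnd _ _ inferInstance (@instDecidableAnd _ _ inferInstance inferInstance))

/-- The three classes of the explicit good partition. -/
def C1 : Finset (Finset (ZMod 6)) := {({0,2} : Finset (ZMod 6)), {0,3}, {3,5}}
def C2 : Finset (Finset (ZMod 6)) := {({1,3} : Finset (ZMod 6)), {1,4}, {0,4}}
def C3 : Finset (Finset (ZMod 6)) := {({2,4} : Finset (ZMod 6)), {2,5}, {1,5}}

lemma hne12 : C1 ≠ C2 := by decide
lemma hne13 : C1 ≠ C3 := by decide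
lemma hne23 : C2 ≠ C3 := by decide

lemma mem_goodP (C : Finset (Finset (ZMod 6))) :
    C ∈ ({C1, C2, C3} : Finset (Finset (Finset (ZMod 6)))) ↔ C = C1 ∨ C = C2 ∨ C = C3 := by
  simp [Finset.mem_insert, Finset.mem_singleton]

lemma cover_fwd : ∀ e : Finset (ZMod 6), InteriorEdge e → e ∈ C1 ∨ e ∈ C2 ∨ e ∈ C3 := by
  decide

lemma cover_bwd1 : ∀ e ∈ C1, InteriorEdge e := by decide
lemma cover_bwd2 : ∀ e ∈ C2, InteriorEdge e := by decide
lemma cover_bwd3 : ∀ e ∈ C3, InteriorEdge e := by decide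

lemma nc1 : ∀ e ∈ C1, ∀ f ∈ C1, e ≠ f → ¬ Crosses e f := by decide
lemma nc2 : ∀ e ∈ C2, ∀ f ∈ C2, e ≠ f → ¬ Crosses e f := by decide
set_option maxRecDepth 4000 in
lemma nc3 : ∀ e ∈ C3, ∀ f ∈ C3, e ≠ f → ¬ Crosses e f := by decide

lemma dis12 : Disjoint C1 C2 := by decide
lemma dis13 : Disjoint C1 C3 := by decide
lemma dis23 : Disjoint C2 C3 := by decide

lemma goodP_sheet : IsSheetPartition ({C1, C2, C3} : Finset (Finset (Finset (ZMod 6)))) := by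
  refine ⟨?_, ?_, ?_, ?_⟩
  · intro C hC
    rcases (mem_goodP C).1 hC with rfl | rfl | rfl
    · exact ⟨{0,2}, by decide⟩
    · exact ⟨{1,3}, by decide⟩
    · exact ⟨{2,4}, by decide⟩
  · intro C hC D hD hne
    rcases (mem_goodP C).1 hC with rfl | rfl | rfl <;>
      rcases (mem_goodP D).1 hD with rfl | rfl | rfl <;>
      first
        | exact absurd rfl hne
        | exact dis12 | exact dis12.symm
        | exact dis13 | exact dis13.symm
        | exact dis23 | exact dis23.symm
  · intro e
    constructor
    · intro he
      rcases cover_fwd e he with h | h | h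
      · exact ⟨C1, (mem_goodP C1).2 (Or.inl rfl), h⟩
      · exact ⟨C2, (mem_goodP C2).2 (Or.inr (Or.inl rfl)), h⟩
      · exact ⟨C3, (mem_goodP C3).2 (Or.inr (Or.inr rfl)), h⟩
    · rintro ⟨C, hC, he⟩
      rcases (mem_goodP C).1 hC with rfl | rfl | rfl
      · exact cover_bwd1 e he
      · exact cover_bwd2 e he
      · exact cover_bwd3 e he
  · intro C hC
    rcases (mem_goodP C).1 hC with rfl | rfl | rfl
    · exact nc1
    · exact nc2
    · exact nc3

lemma goodP_card : ({C1, C2, C3} : Finset (Finset (Finset (ZMod 6)))).card = 3 :=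
  Finset.card_eq_three.mpr ⟨C1, C2, C3, hne12, hne13, hne23, rfl⟩

/-- The nine interior edges of `K₆` can be partitioned into three classes of pairwise
noncrossing edges, and every such partition into classes of pairwise noncrossing edges
has at least three classes. -/
theorem stmt_8 :
    (∃ P : Finset (Finset (Finset (ZMod 6))), IsSheetPartition P ∧ P.card = 3) ∧
    (∀ P : Finset (Finset (Finset (ZMod 6))), IsSheetPartition P → 3 ≤ P.card) := by
  constructor
  · exact ⟨{C1, C2, C3}, goodP_sheet, goodP_card⟩
  · intro P hP
    obtain ⟨-, -, hcov, hnc⟩ := hP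
    have h1 : InteriorEdge ({0,3} : Finset (ZMod 6)) := by decide
    have h2 : InteriorEdge ({1,4} : Finset (ZMod 6)) := by decide
    have h3 : InteriorEdge ({2,5} : Finset (ZMod 6)) := by decide
    obtain ⟨A, hA, hA1⟩ := (hcov _).1 h1
    obtain ⟨B, hB, hB2⟩ := (hcov _).1 h2
    obtain ⟨C, hC, hC3⟩ := (hcov _).1 h3
    have c12 : Crosses ({0,3} : Finset (ZMod 6)) {1,4} := by decide
    have c13 : Crosses ({0,3} : Finset (ZMod 6)) {2,5} := by decide
    have c23 : Crosses ({1,4} : Finset (ZMod 6)) {2,5} := by decide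
    have hAB : A ≠ B := by
      rintro rfl
      exact hnc A hA _ hA1 _ hB2 (by decide) c12
    have hAC : A ≠ C := by
      rintro rfl
      exact hnc A hA _ hA1 _ hC3 (by decide) c13
    have hBC : B ≠ C := by
      rintro rfl
      exact hnc B hB _ hB2 _ hC3 (by decide) c23
    have hsub : ({A, B, C} : Finset (Finset (Finset (ZMod 6)))) ⊆ P := by
      intro X hX
      simp only [Finset.mem_insert, Finset.mem_singleton] at hX
      rcases hX with rfl | rfl | rfl <;> assumption
    have hcard : ({A, B, C} : Finset (Finset (Finset (ZMod 6)))).card = 3 :=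
      Finset.card_eq_three.mpr ⟨A, B, C, hAB, hAC, hBC, rfl⟩
    calc 3 = ({A, B, C} : Finset (Finset (Finset (ZMod 6)))).card := hcard.symm
      _ ≤ P.card := Finset.card_le_card hsub
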